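/- For all u₁, u₂, v ∈ I_{RC}, the Wigner projector D^{RC;u₁} := (d_R/|N_C|) Σ_{m∈N_C} conj(R^{j₁j₁}(m)) A^{q_{i₁} m q_{i₁}⁻¹} B^{c_{i₁}} (with u₁ = (i₁,j₁)) satisfies D^{RC;u₁} F^{RC;u₂v} Ω = δ_{u₁,u₂} F^{RC;u₁v} Ω. -/

import Mathlib

lemma wigner_schur_aux {n : ℕ} (hn : 0 < n) {N : Type*} [Group N] [Fintype N]
    (R : N →* Matrix (Fin n) (Fin n) ℂ)
    (hRu : ∀ m, R m * star (R m) = 1)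
    (hRirr : ∀ M : Matrix (Fin n) (Fin n) ℂ,
      (∀ m, R m * M = M * R m) → ∃ z : ℂ, M = z • (1 : Matrix (Fin n) (Fin n) ℂ))
    (a b c d : Fin n) :
    ∑ m : N, (starRingEnd ℂ) (R m a c) * R m b d =
      ((Fintype.card N : ℂ) / n) * (if a = b then 1 else 0) * (if c = d then 1 else 0) := by
  have hRR : ∀ m : N, R m * R m⁻¹ = 1 := by
    intro m; rw [← map_mul, mul_inv_cancel, map_one]
  have hRR' : ∀ m : N, R m⁻¹ * R m = 1 := by
    intro m; rw [← map_mul, inv_mul_cancel, map_one]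
  have hstar : ∀ m : N, star (R m) = R m⁻¹ := by
    intro m
    calc star (R m) = (R m⁻¹ * R m) * star (R m) := by rw [hRR', one_mul]
    _ = R m⁻¹ * (R m * star (R m)) := by rw [mul_assoc]
    _ = R m⁻¹ := by rw [hRu, mul_one]
  set E : Matrix (Fin n) (Fin n) ℂ := Matrix.single a b 1 with hE
  set M : Matrix (Fin n) (Fin n) ℂ := ∑ m : N, R m⁻¹ * E * R m with hM
  have hcomm : ∀ g, R g * M = M * R g := by
    intro g
    rw [hM, Finset.mul_sum, Finset.sum_mul]
    apply Fintype.sum_equiv (Equiv.mulRight g⁻¹)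
    intro m
    have h1 : R ((m * g⁻¹)⁻¹) = R g * R m⁻¹ := by rw [← map_mul]; congr 1; group
    have h2 : R (m * g⁻¹) * R g = R m := by rw [← map_mul]; congr 1; group
    simp only [Equiv.coe_mulRight]
    rw [mul_assoc (R (m * g⁻¹)⁻¹ * E), h2, h1]
    noncomm_ring
  obtain ⟨z, hz⟩ := hRirr M hcomm
  have htrE : Matrix.trace E = if a = b then 1 else 0 := by
    by_cases hab : a = b
    · subst hab; simp [hE, Matrix.trace_single_eq_same]
    · rw [hE, Matrix.trace_single_eq_of_ne a b (1:ℂ) hab]; simp [hab]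
  have htrM : Matrix.trace M = (Fintype.card N : ℂ) * (if a = b then 1 else 0) := by
    rw [hM, Matrix.trace_sum]
    have : ∀ m : N, Matrix.trace (R m⁻¹ * E * R m) = Matrix.trace E := by
      intro m
      rw [mul_assoc, Matrix.trace_mul_comm, mul_assoc E, hRR, mul_one]
    simp [this, htrE, Finset.sum_const, mul_comm]
  have hz' : z = ((Fintype.card N : ℂ) / n) * (if a = b then 1 else 0) := by
    have hn' : (n : ℂ) ≠ 0 := Nat.cast_ne_zero.mpr hn.ne'
    have h1 : z * n = (Fintype.card N : ℂ) * (if a = b then 1 else 0) := by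
      rw [← htrM, hz, Matrix.trace_smul, Matrix.trace_one]
      simp [mul_comm]
    rw [div_mul_eq_mul_div, eq_div_iff hn']
    linear_combination h1
  have hMcd : M c d = ∑ m : N, (starRingEnd ℂ) (R m a c) * R m b d := by
    rw [hM, Matrix.sum_apply]
    apply Finset.sum_congr rfl
    intro m _
    have : (R m⁻¹ * E * R m) c d = R m⁻¹ c a * R m b d := by
      simp [hE, Matrix.mul_apply, Matrix.single, ite_and, Finset.sum_ite_eq,
        Finset.mul_sum, Finset.sum_mul]
    rw [this, ← hstar]
    simp [Matrix.star_apply, Matrix.conjTranspose_apply]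
  have hfin : M c d = z * (if c = d then 1 else 0) := by
    rw [hz]
    simp [Matrix.smul_apply, Matrix.one_apply]
  rw [← hMcd, hfin, hz']
  try ring



/-- With gauge and flux operators `A^k, B^k` at the initial site of a ribbon
and ground-state vector `Ω`, the Wigner projector
`D^{RC;u₁} = (d_R/|N_C|) Σ_m conj(R^{j₁j₁}(m)) A^{q_{i₁} m q_{i₁}⁻¹} B^{c_{i₁}}` satisfies
`D^{RC;u₁} F^{RC;u₂v} Ω = δ_{u₁,u₂} F^{RC;u₁v} Ω` for all `u₁, u₂, v ∈ I_{RC}`. -/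
theorem quantum_double_Wigner_projector_on_ribbon_state
    {G : Type*} [Group G] [Fintype G] [DecidableEq G]
    {H : Type*} [NormedAddCommGroup H] [InnerProductSpace ℂ H]
    -- ribbon operators and gauge/flux operators at the initial site
    (F : G → G → H →L[ℂ] H) (A B : G → H →L[ℂ] H)
    (hA1 : A 1 = 1)
    (hAmul : ∀ k l : G, A k * A l = A (k * l))
    (hBmul : ∀ k l : G, B k * B l = if k = l then B k else 0)
    (hAF : ∀ k h g : G, A k * F h g = F (k * h * k⁻¹) (k * g) * A k)
    (hBF : ∀ k h g : G, B k * F h g = F h g * B (h * k))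
    -- the ground state vector
    (Ω : H) (hΩA : ∀ k : G, A k Ω = Ω)
    (hΩB : ∀ g : G, B g Ω = if g = 1 then Ω else 0)
    -- the conjugacy class `C = {c_1, …, c_{|C|}}`, representative `r_C`, iterators `q_i`
    (r : G) (nC : ℕ) (c : Fin nC → G) (q : Fin nC → G)
    (hcinj : Function.Injective c)
    (hcclass : ∀ g : G, IsConj r g ↔ ∃ i, c i = g)
    (hq : ∀ i, c i = q i * r * (q i)⁻¹)
    -- the centralizer `N_C` of `r_C` in `G`
    (N : Subgroup G) [Fintype N] (hN : N = Subgroup.centralizer {r})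
    -- an irreducible unitary matrix representation `R` of `N_C` of dimension `d_R`
    (dR : ℕ) (hdR : 0 < dR)
    (R : N →* Matrix (Fin dR) (Fin dR) ℂ)
    (hRunitary : ∀ m, R m * star (R m) = 1)
    (hRirr : ∀ M : Matrix (Fin dR) (Fin dR) ℂ,
      (∀ m, R m * M = M * R m) → ∃ z : ℂ, M = z • (1 : Matrix (Fin dR) (Fin dR) ℂ))
    -- the ribbon operators in the representation basis
    (FRC : Fin nC × Fin dR → Fin nC × Fin dR → H →L[ℂ] H)
    (hFRC : ∀ u v : Fin nC × Fin dR, FRC u v =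
      ((dR : ℂ) / (Fintype.card N : ℂ)) •
        ∑ m : N, star (R m u.2 v.2) • F (c u.1)⁻¹ (q u.1 * (m : G) * (q v.1)⁻¹))
    -- the Wigner projectors `D^{RC;u}`
    (D : Fin nC × Fin dR → H →L[ℂ] H)
    (hD : ∀ u : Fin nC × Fin dR, D u =
      ((dR : ℂ) / (Fintype.card N : ℂ)) •
        ∑ m : N, star (R m u.2 u.2) • (A (q u.1 * (m : G) * (q u.1)⁻¹) * B (c u.1))) :
    ∀ u₁ u₂ v : Fin nC × Fin dR,
      D u₁ (FRC u₂ v Ω) = if u₁ = u₂ then FRC u₁ v Ω else 0 := by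
  intro u₁ u₂ v
  obtain ⟨i₁, j₁⟩ := u₁
  obtain ⟨i₂, j₂⟩ := u₂
  obtain ⟨i', j'⟩ := v
  have hcard : (Fintype.card N : ℂ) ≠ 0 := Nat.cast_ne_zero.mpr Fintype.card_ne_zero
  have hdR' : (dR : ℂ) ≠ 0 := Nat.cast_ne_zero.mpr hdR.ne'
  have hBFΩ : ∀ b h g : G, B b (F h g Ω) = if h * b = 1 then F h g Ω else 0 := by
    intro b h g
    have h1 := congrFun (congrArg DFunLike.coe (hBF b h g)) Ω
    simp only [ContinuousLinearMap.mul_apply] at h1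
    rw [h1, hΩB]
    split <;> simp
  have hAFΩ : ∀ k h g : G, A k (F h g Ω) = F (k*h*k⁻¹) (k*g) Ω := by
    intro k h g
    have h1 := congrFun (congrArg DFunLike.coe (hAF k h g)) Ω
    simp only [ContinuousLinearMap.mul_apply] at h1
    rw [h1, hΩA]
  have key : ∀ k b h g : G, (A k * B b) (F h g Ω)
      = if h * b = 1 then F (k*h*k⁻¹) (k*g) Ω else 0 := by
    intro k b h g
    rw [ContinuousLinearMap.mul_apply, hBFΩ]
    split
    · exact hAFΩ k h g
    · simp
  simp only [hD, hFRC, ContinuousLinearMap.smul_apply, ContinuousLinearMap.sum_apply,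
    map_smul, map_sum]
  simp only [key]
  have hstar : ∀ m : N, star (R m) = R m⁻¹ := by
    intro m
    have hRR' : R m⁻¹ * R m = 1 := by rw [← map_mul, inv_mul_cancel, map_one]
    calc star (R m) = (R m⁻¹ * R m) * star (R m) := by rw [hRR', one_mul]
    _ = R m⁻¹ * (R m * star (R m)) := by rw [mul_assoc]
    _ = R m⁻¹ := by rw [hRunitary, mul_one]
  by_cases hi : i₁ = i₂
  case neg =>
    have hc1 : ¬((c i₂)⁻¹ * c i₁ = 1) := by
      rw [inv_mul_eq_one]
      exact fun h => hi (hcinj h).symm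
    have hne : ¬(((i₁, j₁) : Fin nC × Fin dR) = (i₂, j₂)) := by
      simp only [Prod.mk.injEq, not_and]
      exact fun h => absurd h hi
    simp [hc1, hne]
  case pos =>
    subst hi
    have harg1 : ∀ m : N, q i₁ * (m : G) * (q i₁)⁻¹ * (c i₁)⁻¹ * (q i₁ * (m : G) * (q i₁)⁻¹)⁻¹
        = (c i₁)⁻¹ := by
      intro m
      have hcm : Commute ((m : G)) r⁻¹ := by
        have h0 : (m : G) ∈ Subgroup.centralizer {r} := hN ▸ m.2
        have h1 : r * (m : G) = (m : G) * r :=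
          Subgroup.mem_centralizer_iff.mp h0 r (Set.mem_singleton r)
        exact (Commute.symm h1).inv_right
      have hmr : (m : G) * r⁻¹ * (m : G)⁻¹ = r⁻¹ := by
        rw [hcm.eq]; group
      calc q i₁ * (m : G) * (q i₁)⁻¹ * (c i₁)⁻¹ * (q i₁ * (m : G) * (q i₁)⁻¹)⁻¹
          = q i₁ * ((m : G) * r⁻¹ * (m : G)⁻¹) * (q i₁)⁻¹ := by rw [hq i₁]; group
        _ = q i₁ * r⁻¹ * (q i₁)⁻¹ := by rw [hmr]
        _ = (c i₁)⁻¹ := by rw [hq i₁]; group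
    have harg2 : ∀ m n : N, q i₁ * (m : G) * (q i₁)⁻¹ * (q i₁ * (n : G) * (q i')⁻¹)
        = q i₁ * ((m : G) * (n : G)) * (q i')⁻¹ := by
      intro m n; group
    simp only [inv_mul_cancel, if_pos rfl, harg1, harg2]
    set s : ℂ := (dR : ℂ) / (Fintype.card N : ℂ) with hs
    have coeff : ∀ p : N, (∑ n : N, (s * s) * (star (R (p * n⁻¹) j₁ j₁) * star (R n j₂ j')))
        = if j₁ = j₂ then s * star (R p j₁ j') else 0 := by
      intro p
      have expand : ∀ n : N, star (R (p * n⁻¹) j₁ j₁)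
          = ∑ k, star (R p j₁ k) * R n j₁ k := by
        intro n
        rw [map_mul, ← hstar n, Matrix.mul_apply]
        rw [star_sum]
        refine Finset.sum_congr rfl fun k _ => ?_
        simp [Matrix.star_apply]
      simp only [expand, Finset.sum_mul, Finset.mul_sum]
      rw [Finset.sum_comm]
      have schur : ∀ k, ∑ n : N, (starRingEnd ℂ) (R n j₂ j') * R n j₁ k
          = ((Fintype.card N : ℂ) / dR) * (if j₂ = j₁ then 1 else 0)
              * (if j' = k then 1 else 0) :=
        fun k => wigner_schur_aux hdR R hRunitary hRirr j₂ j₁ j' k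
      have step : ∀ k, (∑ n : N, s * s * (star (R p j₁ k) * R n j₁ k * star (R n j₂ j')))
          = (s * s) * star (R p j₁ k) *
            (((Fintype.card N : ℂ) / dR) * (if j₂ = j₁ then 1 else 0)
              * (if j' = k then 1 else 0)) := by
        intro k
        rw [← schur k, Finset.mul_sum]
        refine Finset.sum_congr rfl fun n _ => ?_
        rw [starRingEnd_apply]
        ring
      simp only [step]
      rw [Finset.sum_congr rfl fun k _ => by
        rw [show (s*s) * star (R p j₁ k) * (((Fintype.card N : ℂ) / dR)
            * (if j₂ = j₁ then 1 else 0) * (if j' = k then 1 else 0))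
          = (if j' = k then ((s*s) * ((Fintype.card N : ℂ) / dR)
              * (if j₂ = j₁ then 1 else 0)) * star (R p j₁ k) else 0) from by
            split_ifs <;> ring]]
      rw [Finset.sum_ite_eq Finset.univ j' (fun k => ((s*s) * ((Fintype.card N : ℂ) / dR)
              * (if j₂ = j₁ then 1 else 0)) * star (R p j₁ k))]
      have hss : s * s * ((Fintype.card N : ℂ) / dR) = s := by
        rw [hs]; field_simp
      by_cases hj : j₁ = j₂
      · subst hj
        simp only [Finset.mem_univ, if_true, if_pos rfl, mul_one]
        rw [hss]
      · simp only [Finset.mem_univ, if_true]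
        rw [if_neg (fun h : j₂ = j₁ => hj h.symm), if_neg hj]
        ring
    calc s • ∑ n : N, star (R n j₂ j') •
            (s • ∑ m : N, star (R m j₁ j₁) • F (c i₁)⁻¹ (q i₁ * ((m : G) * (n : G)) * (q i')⁻¹) Ω)
        = ∑ n : N, ∑ m : N, ((s * s) * (star (R m j₁ j₁) * star (R n j₂ j'))) •
            F (c i₁)⁻¹ (q i₁ * ((m : G) * (n : G)) * (q i')⁻¹) Ω := by
          rw [Finset.smul_sum]
          refine Finset.sum_congr rfl fun n _ => ?_
          rw [smul_smul, mul_comm, ← smul_smul, smul_smul, Finset.smul_sum]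
          rw [Finset.smul_sum]
          refine Finset.sum_congr rfl fun m _ => ?_
          rw [smul_smul, smul_smul]
          congr 1
          ring
      _ = ∑ n : N, ∑ p : N, ((s * s) * (star (R (p * n⁻¹) j₁ j₁) * star (R n j₂ j'))) •
            F (c i₁)⁻¹ (q i₁ * (p : G) * (q i')⁻¹) Ω := by
          refine Finset.sum_congr rfl fun n _ => ?_
          refine Fintype.sum_equiv (Equiv.mulRight n) _ _ fun m => ?_
          simp [mul_assoc]
      _ = ∑ p : N, (∑ n : N, (s * s) * (star (R (p * n⁻¹) j₁ j₁) * star (R n j₂ j'))) •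
            F (c i₁)⁻¹ (q i₁ * (p : G) * (q i')⁻¹) Ω := by
          rw [Finset.sum_comm]
          refine Finset.sum_congr rfl fun p _ => ?_
          rw [Finset.sum_smul]
      _ = if ((i₁, j₁) : Fin nC × Fin dR) = (i₁, j₂) then
            s • ∑ x : N, star (R x j₁ j') • F (c i₁)⁻¹ (q i₁ * (x : G) * (q i')⁻¹) Ω
          else 0 := by
          simp only [coeff]
          by_cases hj : j₁ = j₂
          · subst hj
            rw [if_pos rfl, Finset.smul_sum]
            refine Finset.sum_congr rfl fun p _ => ?_
            rw [if_pos rfl, smul_smul]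
          · rw [if_neg (by simp [hj])]
            simp [hj]
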